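/- Let G be an s-t graph with a tracking set of size at most k, where every vertex and edge of G lies on some s-t path. Then for every pair of vertices u, v of G, the maximum number of pairwise internally vertex-disjoint u-v paths in G is at most k + 1. -/

import Mathlib

set_option linter.unusedSectionVars false
set_option linter.unusedVariables false
set_option maxHeartbeats 1000000
open SimpleGraph Walk List

section AuxTrackingProof
variable {V : Type*} [DecidableEq V] {G : SimpleGraph V} {T : Finset V} {u v : V}



lemma filt_nil (l : List V) (h : ∀ z ∈ l, z ∉ T) : l.filter (· ∈ T) = [] := by
  simp only [List.filter_eq_nil_iff]
  intro a ha; simpa using h a ha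

lemma filt_single {b : V} (l : List V) (hbT : b ∈ T) (hmem : b ∈ l)
    (hcount : l.count b ≤ 1) (hall : ∀ z ∈ l, z ∈ T → z = b) :
    l.filter (· ∈ T) = [b] := by
  induction l with
  | nil => simp at hmem
  | cons z L ih =>
    by_cases hz : z ∈ T
    · have hzb : z = b := hall z (by simp) hz
      subst hzb
      have hcount' : L.count z = 0 := by
        have := hcount; rw [List.count_cons_self] at this; omega
      have : L.filter (· ∈ T) = [] := by
        apply filt_nil
        intro w hw hwT
        have := hall w (by simp [hw]) hwT
        subst this
        simp [List.count_eq_zero] at hcount'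
        exact hcount' hw
      simp [List.filter_cons, hz, this]
    · have hb : b ∈ L := by
        rcases List.mem_cons.1 hmem with h | h
        · exact absurd (h ▸ hbT) hz
        · exact h
      have : z ≠ b := fun h => hz (h ▸ hbT)
      rw [List.filter_cons_of_neg (by simpa using hz)]
      exact ih hb (by rw [List.count_cons_of_ne this] at hcount; omega)
        (fun w hw hwT => hall w (by simp [hw]) hwT)

/-- trace of a path whose only possible tracker is `b`, and `b` is on it. -/
lemma trace_single {a c b : V} (R : G.Walk a c) (hR : R.IsPath) (hbT : b ∈ T)
    (hmem : b ∈ R.support) (hall : ∀ z ∈ R.support, z ∈ T → z = b) :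
    R.support.filter (· ∈ T) = [b] :=
  filt_single _ hbT hmem (List.nodup_iff_count_le_one.1 hR.support_nodup b) hall

/-- trace of the tail of a good u-v walk. -/
lemma trace_tail_good (hab : u ≠ v) (M : G.Walk u v) (hM : M.IsPath)
    (hMT : ∀ z ∈ M.support, z ∈ T → z = u ∨ z = v) :
    M.support.tail.filter (· ∈ T) = if v ∈ T then [v] else [] := by
  have hnd := hM.support_nodup
  have hsup := M.support_eq_cons
  have hunot : u ∉ M.support.tail := by
    rw [hsup, List.nodup_cons] at hnd; exact hnd.1
  have hvtail : v ∈ M.support.tail := by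
    have := M.end_mem_support
    rw [hsup] at this
    rcases List.mem_cons.1 this with h | h
    · exact absurd h.symm hab
    · exact h
  have hallt : ∀ z ∈ M.support.tail, z ∈ T → z = v := by
    intro z hz hzT
    rcases hMT z (by rw [hsup]; exact List.mem_cons_of_mem _ hz) hzT with h | h
    · exact absurd (h ▸ hz) hunot
    · exact h
  by_cases hvT : v ∈ T
  · rw [if_pos hvT]
    refine filt_single _ hvT hvtail ?_ hallt
    have : M.support.tail.Nodup := by rw [hsup, List.nodup_cons] at hnd; exact hnd.2
    exact List.nodup_iff_count_le_one.1 this v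
  · rw [if_neg hvT]
    exact filt_nil _ (fun z hz hzT => hvT ((hallt z hz hzT) ▸ hzT))

lemma isPath_append' {a b c : V} {p : G.Walk a b} {q : G.Walk b c}
    (hp : p.IsPath) (hq : q.IsPath) (h : ∀ w ∈ p.support, w ∈ q.support → w = b) :
    (p.append q).IsPath := by
  rw [Walk.isPath_def, Walk.support_append, List.nodup_append]
  refine ⟨hp.support_nodup, ?_, ?_⟩
  · have := hq.support_nodup
    rw [q.support_eq_cons] at this
    exact this.of_cons
  · intro w hw w' hw' hww'; subst hww'
    have hwq : w ∈ q.support := by rw [q.support_eq_cons]; exact List.mem_cons_of_mem _ hw'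
    have : w = b := h w hw hwq
    subst this
    have := hq.support_nodup
    rw [q.support_eq_cons, List.nodup_cons] at this
    exact this.1 hw'

/-- vertices in both halves of a split are the split point. -/
lemma takeUntil_dropUntil_inter {a b w : V} {p : G.Walk a b} (hp : p.IsPath)
    (h : w ∈ p.support) :
    ∀ z, z ∈ (p.takeUntil w h).support → z ∈ (p.dropUntil w h).support → z = w := by
  intro z hz hz'
  have hnd := hp.support_nodup
  rw [← p.take_spec h, Walk.support_append, List.nodup_append] at hnd
  rw [(p.dropUntil w h).support_eq_cons] at hz'
  rcases List.mem_cons.1 hz' with h1 | h1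
  · exact h1
  · exact absurd (hnd.2.2 _ hz _ h1 rfl) (fun f => f)

lemma end_mem_takeUntil {a b w : V} {p : G.Walk a b} (hp : p.IsPath)
    (h : w ∈ p.support) (hb : b ∈ (p.takeUntil w h).support) : b = w :=
  takeUntil_dropUntil_inter hp h b hb (p.dropUntil w h).end_mem_support

lemma start_mem_dropUntil {a b w : V} {p : G.Walk a b} (hp : p.IsPath)
    (h : w ∈ p.support) (ha : a ∈ (p.dropUntil w h).support) : a = w :=
  takeUntil_dropUntil_inter hp h a (p.takeUntil w h).start_mem_support ha


/-- Two paths u-v with all support vertices in {u,v} are equal. -/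
lemma path_eq_of_support_subset {a b : V} (hab : a ≠ b) (p q : G.Walk a b)
    (hp : p.IsPath) (hq : q.IsPath)
    (hps : ∀ z ∈ p.support, z = a ∨ z = b) (hqs : ∀ z ∈ q.support, z = a ∨ z = b) :
    p = q := by
  have key : ∀ (r : G.Walk a b), r.IsPath → (∀ z ∈ r.support, z = a ∨ z = b) →
      ∃ (h : G.Adj a b), r = Walk.cons h Walk.nil := by
    intro r hr hs
    cases r with
    | nil => exact absurd rfl hab
    | @cons _ c _ h r' =>
      have hc : c = a ∨ c = b := hs c (by simp)
      have hanotr' : a ∉ r'.support := by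
        have := (Walk.cons_isPath_iff h r').1 hr
        exact this.2
      have hc' : c = b := by
        rcases hc with h1 | h1
        · exact absurd (h1 ▸ r'.start_mem_support) hanotr'
        · exact h1
      subst hc'
      have : r' = Walk.nil := by
        have hr' : r'.IsPath := ((Walk.cons_isPath_iff h r').1 hr).1
        exact Walk.isPath_iff_eq_nil.1 hr'
      subst this
      exact ⟨h, rfl⟩
  obtain ⟨h1, e1⟩ := key p hp hps
  obtain ⟨h2, e2⟩ := key q hq hqs
  rw [e1, e2]


lemma exists_first_split (D : Set V) :
    ∀ {a b : V} (Q : G.Walk a b), (∃ w ∈ Q.support, w ∈ D) →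
    ∃ (x : V) (q1 : G.Walk a x) (q2 : G.Walk x b), Q = q1.append q2 ∧ x ∈ D ∧
      ∀ w ∈ q1.support, w ∈ D → w = x := by
  intro a b Q
  induction Q with
  | nil =>
    rintro ⟨w, hw, hwD⟩
    simp only [Walk.support_nil, List.mem_singleton] at hw
    subst hw
    exact ⟨_, Walk.nil, Walk.nil, rfl, hwD, by simp⟩
  | @cons a c b h p ih =>
    rintro ⟨w, hw, hwD⟩
    by_cases haD : a ∈ D
    · exact ⟨a, Walk.nil, Walk.cons h p, rfl, haD, by simp⟩
    · have hwp : w ∈ p.support := by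
        rcases List.mem_cons.1 (by simpa using hw) with h1 | h1
        · exact absurd (h1 ▸ hwD) haD
        · exact h1
      obtain ⟨x, p1, p2, hEq, hxD, hclean⟩ := ih ⟨w, hwp, hwD⟩
      refine ⟨x, Walk.cons h p1, p2, by rw [Walk.cons_append, ← hEq], hxD, ?_⟩
      intro z hz hzD
      rcases List.mem_cons.1 (by simpa using hz) with h1 | h1
      · exact absurd (h1 ▸ hzD) haD
      · exact hclean z h1 hzD

lemma exists_last_split (D : Set V) {a b : V} (Q : G.Walk a b)
    (h : ∃ w ∈ Q.support, w ∈ D) :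
    ∃ (y : V) (q1 : G.Walk a y) (q2 : G.Walk y b), Q = q1.append q2 ∧ y ∈ D ∧
      ∀ w ∈ q2.support, w ∈ D → w = y := by
  obtain ⟨x, r1, r2, hEq, hxD, hclean⟩ := exists_first_split D Q.reverse
    (by obtain ⟨w, hw, hwD⟩ := h; exact ⟨w, by simpa [Walk.support_reverse] using hw, hwD⟩)
  refine ⟨x, r2.reverse, r1.reverse, ?_, hxD, ?_⟩
  · have := congrArg Walk.reverse hEq
    rw [Walk.reverse_reverse, Walk.reverse_append] at this
    exact this
  · intro w hw hwD
    exact hclean w (by simpa [Walk.support_reverse] using hw) hwD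

-- placeholders for already-proved lemmas

lemma good_witness (hab : u ≠ v) {A B : G.Walk u v}
    (hA : A.IsPath) (hB : B.IsPath)
    (hd : ∀ z, z ∈ A.support → z ∈ B.support → z = u ∨ z = v)
    (hne : A ≠ B) :
    ∃ w, (w ∈ A.support ∧ w ∉ B.support ∧ w ≠ u ∧ w ≠ v) ∨
         (w ∈ B.support ∧ w ∉ A.support ∧ w ≠ u ∧ w ≠ v) := by
  by_contra hcon
  push_neg at hcon
  apply hne
  apply path_eq_of_support_subset hab A B hA hB
  · intro z hz
    by_cases hzB : z ∈ B.support
    · exact hd z hz hzB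
    · by_contra hzu
      push_neg at hzu
      exact hzu.2 ((hcon z).1 hz hzB hzu.1)
  · intro z hz
    by_cases hzA : z ∈ A.support
    · exact hd z hzA hz
    · by_contra hzu
      push_neg at hzu
      exact hzu.2 ((hcon z).2 hz hzA hzu.1)






lemma MLdiff0 (hab : u ≠ v) (huT : u ∉ T) (hvT : v ∉ T)
    {A B : G.Walk u v} (hA : A.IsPath) (hB : B.IsPath)
    (hAT : ∀ z ∈ A.support, z ∈ T → z = u ∨ z = v)
    (hBT : ∀ z ∈ B.support, z ∈ T → z = u ∨ z = v)
    (hd : ∀ z, z ∈ A.support → z ∈ B.support → z = u ∨ z = v)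
    (hne : A ≠ B)
    {x y : V} (hx : x ∈ A.support) (hy : y ∈ B.support) (hxy : x ≠ y) :
    ∃ R1 R2 : G.Walk x y, R1.IsPath ∧ R2.IsPath ∧
      (∀ z ∈ R1.support, z ∈ A.support ∨ z ∈ B.support) ∧
      (∀ z ∈ R2.support, z ∈ A.support ∨ z ∈ B.support) ∧
      R1.support.filter (· ∈ T) = R2.support.filter (· ∈ T) ∧
      R1.support ≠ R2.support := by
  have hA1 : (A.takeUntil x hx).IsPath := hA.takeUntil hx
  have hA2 : (A.dropUntil x hx).IsPath := hA.dropUntil hx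
  have hB1 : (B.takeUntil y hy).IsPath := hB.takeUntil hy
  have hB2 : (B.dropUntil y hy).IsPath := hB.dropUntil hy
  have hA1s : (A.takeUntil x hx).support ⊆ A.support := A.support_takeUntil_subset hx
  have hA2s : (A.dropUntil x hx).support ⊆ A.support := A.support_dropUntil_subset hx
  have hB1s : (B.takeUntil y hy).support ⊆ B.support := B.support_takeUntil_subset hy
  have hB2s : (B.dropUntil y hy).support ⊆ B.support := B.support_dropUntil_subset hy
  have hvA1 : v ∈ (A.takeUntil x hx).support → v = x := end_mem_takeUntil hA hx
  have hvB1 : v ∈ (B.takeUntil y hy).support → v = y := end_mem_takeUntil hB hy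
  have huA2 : u ∈ (A.dropUntil x hx).support → u = x := start_mem_dropUntil hA hx
  have huB2 : u ∈ (B.dropUntil y hy).support → u = y := start_mem_dropUntil hB hy
  have hsub1 : ∀ z ∈ ((A.takeUntil x hx).reverse.append (B.takeUntil y hy)).support,
      z ∈ A.support ∨ z ∈ B.support := by
    intro z hz
    rw [Walk.support_append, List.mem_append] at hz
    rcases hz with h | h
    · rw [Walk.support_reverse, List.mem_reverse] at h
      exact Or.inl (hA1s h)
    · exact Or.inr (hB1s (List.mem_of_mem_tail h))
  have hsub2 : ∀ z ∈ ((A.dropUntil x hx).append (B.dropUntil y hy).reverse).support,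
      z ∈ A.support ∨ z ∈ B.support := by
    intro z hz
    rw [Walk.support_append, List.mem_append] at hz
    rcases hz with h | h
    · exact Or.inl (hA2s h)
    · have h' := List.mem_of_mem_tail h
      rw [Walk.support_reverse, List.mem_reverse] at h'
      exact Or.inr (hB2s h')
  refine ⟨(A.takeUntil x hx).reverse.append (B.takeUntil y hy),
          (A.dropUntil x hx).append (B.dropUntil y hy).reverse, ?_, ?_, hsub1, hsub2, ?_, ?_⟩
  · refine isPath_append' hA1.reverse hB1 ?_
    intro w hw hw'
    rw [Walk.support_reverse, List.mem_reverse] at hw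
    rcases hd w (hA1s hw) (hB1s hw') with h | h
    · exact h
    · subst h
      exact absurd ((hvA1 hw).symm.trans (hvB1 hw')) hxy
  · refine isPath_append' hA2 hB2.reverse ?_
    intro w hw hw'
    rw [Walk.support_reverse, List.mem_reverse] at hw'
    rcases hd w (hA2s hw) (hB2s hw') with h | h
    · subst h
      exact absurd ((huA2 hw).symm.trans (huB2 hw')) hxy
    · exact h
  · -- trace equality: both nil
    have key : ∀ z, (z ∈ A.support ∨ z ∈ B.support) → z ∉ T := by
      rintro z (hz | hz) hzT
      · rcases hAT z hz hzT with h | h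
        · exact huT (h ▸ hzT)
        · exact hvT (h ▸ hzT)
      · rcases hBT z hz hzT with h | h
        · exact huT (h ▸ hzT)
        · exact hvT (h ▸ hzT)
    rw [filt_nil _ (fun z hz => key z (hsub1 z hz)), filt_nil _ (fun z hz => key z (hsub2 z hz))]
  · -- distinctness
    have huR1 : u ∈ ((A.takeUntil x hx).reverse.append (B.takeUntil y hy)).support := by
      rw [Walk.support_append, List.mem_append]
      left
      rw [Walk.support_reverse, List.mem_reverse]
      exact Walk.start_mem_support _
    have hvR2 : v ∈ ((A.dropUntil x hx).append (B.dropUntil y hy).reverse).support := by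
      rw [Walk.support_append, List.mem_append]
      left
      exact Walk.end_mem_support _
    by_cases hvR1 : v ∈ ((A.takeUntil x hx).reverse.append (B.takeUntil y hy)).support
    · by_cases huR2 : u ∈ ((A.dropUntil x hx).append (B.dropUntil y hy).reverse).support
      · -- both degenerate
        have hv' : v = x ∨ v = y := by
          rw [Walk.support_append, List.mem_append] at hvR1
          rcases hvR1 with h | h
          · rw [Walk.support_reverse, List.mem_reverse] at h
            exact Or.inl (hvA1 h)
          · exact Or.inr (hvB1 (List.mem_of_mem_tail h))
        have hu' : u = x ∨ u = y := by
          rw [Walk.support_append, List.mem_append] at huR2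
          rcases huR2 with h | h
          · exact Or.inl (huA2 h)
          · have h' := List.mem_of_mem_tail h
            rw [Walk.support_reverse, List.mem_reverse] at h'
            exact Or.inr (huB2 h')
        obtain ⟨w, hw⟩ := good_witness hab hA hB hd hne
        rcases hv' with hv' | hv' <;> rcases hu' with hu' | hu'
        · exact absurd (hu'.trans hv'.symm) hab
        · -- x = v, y = u : R1 = A.reverse, R2 = B.reverse
          subst hv'
          subst hu'
          have hA2nil : A.dropUntil v hx = Walk.nil := Walk.isPath_iff_eq_nil.1 hA2
          have hB1nil : B.takeUntil u hy = Walk.nil := Walk.isPath_iff_eq_nil.1 hB1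
          have hA1A : A.takeUntil v hx = A := by
            have h0 := A.take_spec hx
            rw [hA2nil, Walk.append_nil] at h0
            exact h0
          have hB2B : B.dropUntil u hy = B := by
            have h0 := B.take_spec hy
            rw [hB1nil, Walk.nil_append] at h0
            exact h0
          rw [hA1A, hB1nil, hA2nil, hB2B]
          intro hEq
          rw [Walk.append_nil, Walk.nil_append] at hEq
          rw [Walk.support_reverse, Walk.support_reverse] at hEq
          have hEq' : A.support = B.support := List.reverse_injective hEq
          rcases hw with ⟨hwA, hwB, _, _⟩ | ⟨hwB, hwA, _, _⟩
          · exact hwB (by rw [← hEq']; exact hwA)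
          · exact hwA (by rw [hEq']; exact hwB)
        · -- x = u, y = v : R1 = B, R2 = A
          subst hu'
          subst hv'
          have hA1nil : A.takeUntil u hx = Walk.nil := Walk.isPath_iff_eq_nil.1 hA1
          have hB2nil : B.dropUntil v hy = Walk.nil := Walk.isPath_iff_eq_nil.1 hB2
          have hA2A : A.dropUntil u hx = A := by
            have h0 := A.take_spec hx
            rw [hA1nil, Walk.nil_append] at h0
            exact h0
          have hB1B : B.takeUntil v hy = B := by
            have h0 := B.take_spec hy
            rw [hB2nil, Walk.append_nil] at h0
            exact h0
          rw [hA1nil, hB1B, hA2A, hB2nil]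
          intro hEq
          rw [Walk.reverse_nil, Walk.nil_append, Walk.reverse_nil, Walk.append_nil] at hEq
          rcases hw with ⟨hwA, hwB, _, _⟩ | ⟨hwB, hwA, _, _⟩
          · exact hwB (by rw [hEq]; exact hwA)
          · exact hwA (by rw [← hEq]; exact hwB)
        · exact absurd (hu'.trans hv'.symm) hab
      · -- u ∉ R2 : differ at u
        intro hEq
        exact huR2 (by rw [← hEq]; exact huR1)
    · -- v ∉ R1 : differ at v
      intro hEq
      exact hvR1 (by rw [hEq]; exact hvR2)


lemma mem_rev_support {a b w : V} (p : G.Walk a b) :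
    w ∈ p.reverse.support ↔ w ∈ p.support := by
  rw [Walk.support_reverse, List.mem_reverse]

lemma MLdiff1 (hab : u ≠ v) (huT : u ∈ T) (hvT : v ∉ T)
    {A B M : G.Walk u v} (hA : A.IsPath) (hB : B.IsPath) (hM : M.IsPath)
    (hdAB : ∀ z, z ∈ A.support → z ∈ B.support → z = u ∨ z = v)
    (hdAM : ∀ z, z ∈ A.support → z ∈ M.support → z = u ∨ z = v)
    (hdBM : ∀ z, z ∈ B.support → z ∈ M.support → z = u ∨ z = v)
    (hAM : A ≠ M) (hBM : B ≠ M)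
    (hTall : ∀ z, (z ∈ A.support ∨ z ∈ B.support ∨ z ∈ M.support) → z ∈ T → z = u)
    {x y : V} (hx : x ∈ A.support) (hy : y ∈ B.support) (hxy : x ≠ y) :
    ∃ R1 R2 : G.Walk x y, R1.IsPath ∧ R2.IsPath ∧
      (∀ z ∈ R1.support, z ∈ A.support ∨ z ∈ B.support ∨ z ∈ M.support) ∧
      (∀ z ∈ R2.support, z ∈ A.support ∨ z ∈ B.support ∨ z ∈ M.support) ∧
      R1.support.filter (· ∈ T) = R2.support.filter (· ∈ T) ∧
      R1.support ≠ R2.support := by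
  have hA1 : (A.takeUntil x hx).IsPath := hA.takeUntil hx
  have hA2 : (A.dropUntil x hx).IsPath := hA.dropUntil hx
  have hB1 : (B.takeUntil y hy).IsPath := hB.takeUntil hy
  have hB2 : (B.dropUntil y hy).IsPath := hB.dropUntil hy
  have hA1s : (A.takeUntil x hx).support ⊆ A.support := A.support_takeUntil_subset hx
  have hA2s : (A.dropUntil x hx).support ⊆ A.support := A.support_dropUntil_subset hx
  have hB1s : (B.takeUntil y hy).support ⊆ B.support := B.support_takeUntil_subset hy
  have hB2s : (B.dropUntil y hy).support ⊆ B.support := B.support_dropUntil_subset hy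
  have hvA1 : v ∈ (A.takeUntil x hx).support → v = x := end_mem_takeUntil hA hx
  have hvB1 : v ∈ (B.takeUntil y hy).support → v = y := end_mem_takeUntil hB hy
  have huA2 : u ∈ (A.dropUntil x hx).support → u = x := start_mem_dropUntil hA hx
  have huB2 : u ∈ (B.dropUntil y hy).support → u = y := start_mem_dropUntil hB hy
  -- S1 facts
  have hS1path : ((A.takeUntil x hx).reverse.append (B.takeUntil y hy)).IsPath := by
    refine isPath_append' hA1.reverse hB1 ?_
    intro w hw hw'
    rw [mem_rev_support] at hw
    rcases hdAB w (hA1s hw) (hB1s hw') with h | h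
    · exact h
    · subst h
      exact absurd ((hvA1 hw).symm.trans (hvB1 hw')) hxy
  have hS1sub : ∀ z ∈ ((A.takeUntil x hx).reverse.append (B.takeUntil y hy)).support,
      z ∈ A.support ∨ z ∈ B.support ∨ z ∈ M.support := by
    intro z hz
    rw [Walk.mem_support_append_iff] at hz
    rcases hz with h | h
    · rw [mem_rev_support] at h
      exact Or.inl (hA1s h)
    · exact Or.inr (Or.inl (hB1s h))
  have huS1 : u ∈ ((A.takeUntil x hx).reverse.append (B.takeUntil y hy)).support := by
    rw [Walk.mem_support_append_iff]
    left
    rw [mem_rev_support]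
    exact Walk.start_mem_support _
  have hS1tr : ((A.takeUntil x hx).reverse.append (B.takeUntil y hy)).support.filter (· ∈ T)
      = [u] :=
    trace_single _ hS1path huT huS1 (fun z hz => hTall z (hS1sub z hz))
  -- not-mem facts for v in S1
  have hvS1 : x ≠ v → y ≠ v →
      v ∉ ((A.takeUntil x hx).reverse.append (B.takeUntil y hy)).support := by
    intro hxv hyv hmem
    rw [Walk.mem_support_append_iff] at hmem
    rcases hmem with h | h
    · rw [mem_rev_support] at h
      exact hxv (hvA1 h).symm
    · exact hyv (hvB1 h).symm
  by_cases hbr : x = v ∨ y = u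
  · -- use S4 = A2 ++ (M.reverse ++ B1)
    have hxu : x ≠ u := by
      intro hh
      rcases hbr with h | h
      · exact hab (hh.symm.trans h)
      · exact hxy (hh.trans h.symm)
    have hyv : y ≠ v := by
      intro hh
      rcases hbr with h | h
      · exact hxy (h.trans hh.symm)
      · exact hab (h.symm.trans hh)
    have hinner : ((M.reverse).append (B.takeUntil y hy)).IsPath := by
      refine isPath_append' hM.reverse hB1 ?_
      intro w hw hw'
      rw [mem_rev_support] at hw
      rcases hdBM w (hB1s hw') hw with h | h
      · exact h
      · subst h
        exact absurd (hvB1 hw').symm hyv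
    have hS4path : ((A.dropUntil x hx).append ((M.reverse).append (B.takeUntil y hy))).IsPath := by
      refine isPath_append' hA2 hinner ?_
      intro w hw hw'
      rw [Walk.mem_support_append_iff] at hw'
      rcases hw' with h | h
      · rw [mem_rev_support] at h
        rcases hdAM w (hA2s hw) h with h1 | h1
        · subst h1
          exact absurd (huA2 hw).symm hxu
        · exact h1
      · rcases hdAB w (hA2s hw) (hB1s h) with h1 | h1
        · subst h1
          exact absurd (huA2 hw).symm hxu
        · subst h1
          exact absurd (hvB1 h).symm hyv
    have hS4sub : ∀ z ∈ ((A.dropUntil x hx).append ((M.reverse).append (B.takeUntil y hy))).support,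
        z ∈ A.support ∨ z ∈ B.support ∨ z ∈ M.support := by
      intro z hz
      rw [Walk.mem_support_append_iff, Walk.mem_support_append_iff] at hz
      rcases hz with h | h | h
      · exact Or.inl (hA2s h)
      · rw [mem_rev_support] at h
        exact Or.inr (Or.inr h)
      · exact Or.inr (Or.inl (hB1s h))
    have huS4 : u ∈ ((A.dropUntil x hx).append ((M.reverse).append (B.takeUntil y hy))).support := by
      rw [Walk.mem_support_append_iff, Walk.mem_support_append_iff]
      right; left
      rw [mem_rev_support]
      exact Walk.start_mem_support _
    have hS4tr := trace_single (T := T) _ hS4path huT huS4 (fun z hz => hTall z (hS4sub z hz))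
    refine ⟨_, _, hS1path, hS4path, hS1sub, hS4sub, by rw [hS1tr, hS4tr], ?_⟩
    -- distinctness
    by_cases hMint : ∃ w, w ∈ M.support ∧ w ≠ u ∧ w ≠ v
    · obtain ⟨w, hwM, hwu, hwv⟩ := hMint
      have hwA : w ∉ A.support := fun h => by
        rcases hdAM w h hwM with h1 | h1
        · exact hwu h1
        · exact hwv h1
      have hwB : w ∉ B.support := fun h => by
        rcases hdBM w h hwM with h1 | h1
        · exact hwu h1
        · exact hwv h1
      intro hEq
      have hwS4 : w ∈ ((A.dropUntil x hx).append ((M.reverse).append (B.takeUntil y hy))).support := by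
        rw [Walk.mem_support_append_iff, Walk.mem_support_append_iff]
        right; left
        rw [mem_rev_support]
        exact hwM
      rw [← hEq] at hwS4
      rw [Walk.mem_support_append_iff] at hwS4
      rcases hwS4 with h | h
      · rw [mem_rev_support] at h
        exact hwA (hA1s h)
      · exact hwB (hB1s h)
    · push_neg at hMint
      -- M has no interior
      by_cases hxv : x = v
      · -- A1 = A, A2 = nil case : witness in interior of A
        have hvx : v = x := hxv.symm
        subst hvx
        have hA2nil : A.dropUntil v hx = Walk.nil := Walk.isPath_iff_eq_nil.1 hA2
        have hA1A : A.takeUntil v hx = A := by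
          have h0 := A.take_spec hx
          rw [hA2nil, Walk.append_nil] at h0
          exact h0
        have hAint : ∃ w, w ∈ A.support ∧ w ≠ u ∧ w ≠ v := by
          by_contra hcon
          push_neg at hcon
          exact hAM (path_eq_of_support_subset hab A M hA hM
            (fun z hz => by
              by_cases h1 : z = u
              · exact Or.inl h1
              · exact Or.inr (hcon z hz h1))
            (fun z hz => by
              by_cases h1 : z = u
              · exact Or.inl h1
              · exact Or.inr (hMint z hz h1)))
        obtain ⟨w, hwA, hwu, hwv⟩ := hAint
        have hwB : w ∉ B.support := fun h => by
          rcases hdAB w hwA h with h1 | h1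
          · exact hwu h1
          · exact hwv h1
        have hwM' : w ∉ M.support := fun h => by
          rcases hdAM w hwA h with h1 | h1
          · exact hwu h1
          · exact hwv h1
        have hwS1 : w ∈ ((A.takeUntil v hx).reverse.append (B.takeUntil y hy)).support := by
          rw [Walk.mem_support_append_iff]
          left
          rw [mem_rev_support, hA1A]
          exact hwA
        intro hEq
        rw [hEq] at hwS1
        rw [Walk.mem_support_append_iff, Walk.mem_support_append_iff] at hwS1
        rcases hwS1 with h | h | h
        · rw [hA2nil] at h
          exact hwv (by simpa using h)
        · rw [mem_rev_support] at h
          exact hwM' h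
        · exact hwB (hB1s h)
      · -- x ≠ v : differ at v
        have hvS4 : v ∈ ((A.dropUntil x hx).append ((M.reverse).append (B.takeUntil y hy))).support := by
          rw [Walk.mem_support_append_iff]
          left
          exact Walk.end_mem_support _
        have hyu : y = u := by
          rcases hbr with h | h
          · exact absurd h hxv
          · exact h
        have hvno : v ∉ ((A.takeUntil x hx).reverse.append (B.takeUntil y hy)).support :=
          hvS1 hxv (fun h => hab (hyu.symm.trans h))
        intro hEq
        exact hvno (by rw [hEq]; exact hvS4)
  · -- use S2 = A1.rev ++ (M ++ B2.rev)
    push_neg at hbr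
    obtain ⟨hxv, hyu⟩ := hbr
    have hinner : (M.append (B.dropUntil y hy).reverse).IsPath := by
      refine isPath_append' hM hB2.reverse ?_
      intro w hw hw'
      rw [mem_rev_support] at hw'
      rcases hdBM w (hB2s hw') hw with h | h
      · subst h
        exact absurd (huB2 hw').symm hyu
      · exact h
    have hS2path : ((A.takeUntil x hx).reverse.append (M.append (B.dropUntil y hy).reverse)).IsPath := by
      refine isPath_append' hA1.reverse hinner ?_
      intro w hw hw'
      rw [mem_rev_support] at hw
      rw [Walk.mem_support_append_iff] at hw'
      rcases hw' with h | h
      · rcases hdAM w (hA1s hw) h with h1 | h1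
        · exact h1
        · subst h1
          exact absurd (hvA1 hw).symm hxv
      · rw [mem_rev_support] at h
        rcases hdAB w (hA1s hw) (hB2s h) with h1 | h1
        · subst h1
          exact absurd (huB2 h).symm hyu
        · subst h1
          exact absurd (hvA1 hw).symm hxv
    have hS2sub : ∀ z ∈ ((A.takeUntil x hx).reverse.append (M.append (B.dropUntil y hy).reverse)).support,
        z ∈ A.support ∨ z ∈ B.support ∨ z ∈ M.support := by
      intro z hz
      rw [Walk.mem_support_append_iff, Walk.mem_support_append_iff] at hz
      rcases hz with h | h | h
      · rw [mem_rev_support] at h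
        exact Or.inl (hA1s h)
      · exact Or.inr (Or.inr h)
      · rw [mem_rev_support] at h
        exact Or.inr (Or.inl (hB2s h))
    have huS2 : u ∈ ((A.takeUntil x hx).reverse.append (M.append (B.dropUntil y hy).reverse)).support := by
      rw [Walk.mem_support_append_iff]
      right
      rw [Walk.mem_support_append_iff]
      left
      exact Walk.start_mem_support _
    have hS2tr := trace_single (T := T) _ hS2path huT huS2 (fun z hz => hTall z (hS2sub z hz))
    refine ⟨_, _, hS1path, hS2path, hS1sub, hS2sub, by rw [hS1tr, hS2tr], ?_⟩
    by_cases hMint : ∃ w, w ∈ M.support ∧ w ≠ u ∧ w ≠ v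
    · obtain ⟨w, hwM, hwu, hwv⟩ := hMint
      have hwA : w ∉ A.support := fun h => by
        rcases hdAM w h hwM with h1 | h1
        · exact hwu h1
        · exact hwv h1
      have hwB : w ∉ B.support := fun h => by
        rcases hdBM w h hwM with h1 | h1
        · exact hwu h1
        · exact hwv h1
      intro hEq
      have hwS2 : w ∈ ((A.takeUntil x hx).reverse.append (M.append (B.dropUntil y hy).reverse)).support := by
        rw [Walk.mem_support_append_iff]
        right
        rw [Walk.mem_support_append_iff]
        left
        exact hwM
      rw [← hEq] at hwS2
      rw [Walk.mem_support_append_iff] at hwS2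
      rcases hwS2 with h | h
      · rw [mem_rev_support] at h
        exact hwA (hA1s h)
      · exact hwB (hB1s h)
    · push_neg at hMint
      by_cases hyv : y = v
      · -- B1 = B, B2 = nil : witness in interior of B
        have hvy : v = y := hyv.symm
        subst hvy
        have hB2nil : B.dropUntil v hy = Walk.nil := Walk.isPath_iff_eq_nil.1 hB2
        have hB1B : B.takeUntil v hy = B := by
          have h0 := B.take_spec hy
          rw [hB2nil, Walk.append_nil] at h0
          exact h0
        have hBint : ∃ w, w ∈ B.support ∧ w ≠ u ∧ w ≠ v := by
          by_contra hcon
          push_neg at hcon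
          exact hBM (path_eq_of_support_subset hab B M hB hM
            (fun z hz => by
              by_cases h1 : z = u
              · exact Or.inl h1
              · exact Or.inr (hcon z hz h1))
            (fun z hz => by
              by_cases h1 : z = u
              · exact Or.inl h1
              · exact Or.inr (hMint z hz h1)))
        obtain ⟨w, hwB, hwu, hwv⟩ := hBint
        have hwA : w ∉ A.support := fun h => by
          rcases hdAB w h hwB with h1 | h1
          · exact hwu h1
          · exact hwv h1
        have hwM' : w ∉ M.support := fun h => by
          rcases hdBM w hwB h with h1 | h1
          · exact hwu h1
          · exact hwv h1
        have hwS1 : w ∈ ((A.takeUntil x hx).reverse.append (B.takeUntil v hy)).support := by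
          rw [Walk.mem_support_append_iff]
          right
          rw [hB1B]
          exact hwB
        intro hEq
        rw [hEq] at hwS1
        rw [Walk.mem_support_append_iff, Walk.mem_support_append_iff] at hwS1
        rcases hwS1 with h | h | h
        · rw [mem_rev_support] at h
          exact hwA (hA1s h)
        · exact hwM' h
        · rw [mem_rev_support, hB2nil] at h
          exact hwv (by simpa using h)
      · -- y ≠ v : differ at v
        have hvS2 : v ∈ ((A.takeUntil x hx).reverse.append (M.append (B.dropUntil y hy).reverse)).support := by
          rw [Walk.mem_support_append_iff]
          right
          rw [Walk.mem_support_append_iff]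
          left
          exact Walk.end_mem_support _
        have hvno := hvS1 hxv hyv
        intro hEq
        exact hvno (by rw [hEq]; exact hvS2)




lemma S2shape (hab : u ≠ v)
    {A B N : G.Walk u v} (hA : A.IsPath) (hB : B.IsPath) (hN : N.IsPath)
    (hdAB : ∀ z, z ∈ A.support → z ∈ B.support → z = u ∨ z = v)
    (hdAN : ∀ z, z ∈ A.support → z ∈ N.support → z = u ∨ z = v)
    (hdBN : ∀ z, z ∈ B.support → z ∈ N.support → z = u ∨ z = v)
    {x y : V} (hx : x ∈ A.support) (hy : y ∈ B.support) (hxv : x ≠ v) (hyu : y ≠ u) :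
    ((A.takeUntil x hx).reverse.append (N.append (B.dropUntil y hy).reverse)).IsPath ∧
    (∀ z ∈ ((A.takeUntil x hx).reverse.append (N.append (B.dropUntil y hy).reverse)).support,
      z ∈ A.support ∨ z ∈ B.support ∨ z ∈ N.support) ∧
    ((A.takeUntil x hx).reverse.append (N.append (B.dropUntil y hy).reverse)).support
      = (A.takeUntil x hx).reverse.support
        ++ (N.support.tail ++ (B.dropUntil y hy).reverse.support.tail) := by
  have hA1 : (A.takeUntil x hx).IsPath := hA.takeUntil hx
  have hB2 : (B.dropUntil y hy).IsPath := hB.dropUntil hy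
  have hA1s : (A.takeUntil x hx).support ⊆ A.support := A.support_takeUntil_subset hx
  have hB2s : (B.dropUntil y hy).support ⊆ B.support := B.support_dropUntil_subset hy
  have hvA1 : v ∈ (A.takeUntil x hx).support → v = x := end_mem_takeUntil hA hx
  have huB2 : u ∈ (B.dropUntil y hy).support → u = y := start_mem_dropUntil hB hy
  refine ⟨?_, ?_, ?_⟩
  · refine isPath_append' hA1.reverse ?_ ?_
    · refine isPath_append' hN hB2.reverse ?_
      intro w hw hw'
      rw [mem_rev_support] at hw'
      rcases hdBN w (hB2s hw') hw with h | h
      · subst h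
        exact absurd (huB2 hw').symm hyu
      · exact h
    · intro w hw hw'
      rw [mem_rev_support] at hw
      rw [Walk.mem_support_append_iff] at hw'
      rcases hw' with h | h
      · rcases hdAN w (hA1s hw) h with h1 | h1
        · exact h1
        · subst h1
          exact absurd (hvA1 hw).symm hxv
      · rw [mem_rev_support] at h
        rcases hdAB w (hA1s hw) (hB2s h) with h1 | h1
        · subst h1
          exact absurd (huB2 h).symm hyu
        · subst h1
          exact absurd (hvA1 hw).symm hxv
  · intro z hz
    rw [Walk.mem_support_append_iff, Walk.mem_support_append_iff] at hz
    rcases hz with h | h | h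
    · rw [mem_rev_support] at h
      exact Or.inl (hA1s h)
    · exact Or.inr (Or.inr h)
    · rw [mem_rev_support] at h
      exact Or.inr (Or.inl (hB2s h))
  · rw [Walk.support_append, Walk.tail_support_append]

lemma MLdiff2 (hab : u ≠ v) (hvT : v ∈ T)
    {A B M M' : G.Walk u v} (hA : A.IsPath) (hB : B.IsPath) (hM : M.IsPath) (hM' : M'.IsPath)
    (hMT : ∀ z ∈ M.support, z ∈ T → z = u ∨ z = v)
    (hM'T : ∀ z ∈ M'.support, z ∈ T → z = u ∨ z = v)
    (hdAB : ∀ z, z ∈ A.support → z ∈ B.support → z = u ∨ z = v)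
    (hdAM : ∀ z, z ∈ A.support → z ∈ M.support → z = u ∨ z = v)
    (hdBM : ∀ z, z ∈ B.support → z ∈ M.support → z = u ∨ z = v)
    (hdAM' : ∀ z, z ∈ A.support → z ∈ M'.support → z = u ∨ z = v)
    (hdBM' : ∀ z, z ∈ B.support → z ∈ M'.support → z = u ∨ z = v)
    (hdMM' : ∀ z, z ∈ M.support → z ∈ M'.support → z = u ∨ z = v)
    (hMM' : M ≠ M')
    {x y : V} (hx : x ∈ A.support) (hy : y ∈ B.support) (hxv : x ≠ v) (hyu : y ≠ u) :
    ∃ R1 R2 : G.Walk x y, R1.IsPath ∧ R2.IsPath ∧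
      (∀ z ∈ R1.support, z ∈ A.support ∨ z ∈ B.support ∨ z ∈ M.support ∨ z ∈ M'.support) ∧
      (∀ z ∈ R2.support, z ∈ A.support ∨ z ∈ B.support ∨ z ∈ M.support ∨ z ∈ M'.support) ∧
      R1.support.filter (· ∈ T) = R2.support.filter (· ∈ T) ∧
      R1.support ≠ R2.support := by
  obtain ⟨hp1, hs1, hd1⟩ := S2shape hab hA hB hM hdAB hdAM hdBM hx hy hxv hyu
  obtain ⟨hp2, hs2, hd2⟩ := S2shape hab hA hB hM' hdAB hdAM' hdBM' hx hy hxv hyu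
  refine ⟨_, _, hp1, hp2, ?_, ?_, ?_, ?_⟩
  · intro z hz
    rcases hs1 z hz with h | h | h
    · exact Or.inl h
    · exact Or.inr (Or.inl h)
    · exact Or.inr (Or.inr (Or.inl h))
  · intro z hz
    rcases hs2 z hz with h | h | h
    · exact Or.inl h
    · exact Or.inr (Or.inl h)
    · exact Or.inr (Or.inr (Or.inr h))
  · rw [hd1, hd2, List.filter_append, List.filter_append,
      List.filter_append, List.filter_append,
      trace_tail_good hab M hM hMT, trace_tail_good hab M' hM' hM'T]
  · obtain ⟨w, hw⟩ := good_witness hab hM hM' hdMM' hMM'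
    rcases hw with ⟨hwM, hwM', hwu, hwv⟩ | ⟨hwM', hwM, hwu, hwv⟩
    · have hwA : w ∉ A.support := fun h => by
        rcases hdAM w h hwM with h1 | h1
        · exact hwu h1
        · exact hwv h1
      have hwB : w ∉ B.support := fun h => by
        rcases hdBM w h hwM with h1 | h1
        · exact hwu h1
        · exact hwv h1
      intro hEq
      have hmem : w ∈ ((A.takeUntil x hx).reverse.append
          (M.append (B.dropUntil y hy).reverse)).support := by
        rw [Walk.mem_support_append_iff, Walk.mem_support_append_iff]
        right; left
        exact hwM
      rw [hEq] at hmem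
      rcases hs2 w hmem with h | h | h
      · exact hwA h
      · exact hwB h
      · exact hwM' h
    · have hwA : w ∉ A.support := fun h => by
        rcases hdAM' w h hwM' with h1 | h1
        · exact hwu h1
        · exact hwv h1
      have hwB : w ∉ B.support := fun h => by
        rcases hdBM' w h hwM' with h1 | h1
        · exact hwu h1
        · exact hwv h1
      intro hEq
      have hmem : w ∈ ((A.takeUntil x hx).reverse.append
          (M'.append (B.dropUntil y hy).reverse)).support := by
        rw [Walk.mem_support_append_iff, Walk.mem_support_append_iff]
        right; left
        exact hwM'
      rw [← hEq] at hmem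
      rcases hs1 w hmem with h | h | h
      · exact hwA h
      · exact hwB h
      · exact hwM h

lemma inter_of_isPath_append {a b c : V} {pw : G.Walk a b} {qw : G.Walk b c}
    (h : (pw.append qw).IsPath) : ∀ w, w ∈ pw.support → w ∈ qw.support → w = b := by
  have hnd := h.support_nodup
  rw [Walk.support_append, List.nodup_append] at hnd
  intro w hw hw'
  rw [qw.support_eq_cons] at hw'
  rcases List.mem_cons.1 hw' with h1 | h1
  · exact h1
  · exact (hnd.2.2 _ hw _ h1 rfl).elim

lemma RMshape (hab : u ≠ v) {p q : V}
    {w1 : G.Walk u p} {w2 : G.Walk p q} {w3 : G.Walk q v} {N : G.Walk u v}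
    (hP : (w1.append (w2.append w3)).IsPath) (hN : N.IsPath)
    (hdPN : ∀ z, z ∈ (w1.append (w2.append w3)).support → z ∈ N.support → z = u ∨ z = v)
    (hpu : p ≠ u) (hpv : p ≠ v) (hqu : q ≠ u) (hqv : q ≠ v) (hpq : p ≠ q) :
    (w1.reverse.append (N.append w3.reverse)).IsPath ∧
    (∀ z ∈ (w1.reverse.append (N.append w3.reverse)).support,
      z ∈ (w1.append (w2.append w3)).support ∨ z ∈ N.support) ∧
    (w1.reverse.append (N.append w3.reverse)).support
      = w1.reverse.support ++ (N.support.tail ++ w3.reverse.support.tail) := by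
  have hw1 : w1.IsPath := Walk.IsPath.of_append_left hP
  have h23 : (w2.append w3).IsPath := Walk.IsPath.of_append_right hP
  have hw3 : w3.IsPath := Walk.IsPath.of_append_right h23
  have J1 : ∀ w, w ∈ w1.support → w ∈ (w2.append w3).support → w = p :=
    inter_of_isPath_append hP
  have J2 : ∀ w, w ∈ w2.support → w ∈ w3.support → w = q :=
    inter_of_isPath_append h23
  have hw1P : ∀ z ∈ w1.support, z ∈ (w1.append (w2.append w3)).support := by
    intro z hz
    rw [Walk.mem_support_append_iff]
    exact Or.inl hz
  have hw3P : ∀ z ∈ w3.support, z ∈ (w1.append (w2.append w3)).support := by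
    intro z hz
    rw [Walk.mem_support_append_iff, Walk.mem_support_append_iff]
    exact Or.inr (Or.inr hz)
  have vnotw1 : v ∉ w1.support := by
    intro h
    have : v ∈ (w2.append w3).support := by
      rw [Walk.mem_support_append_iff]
      exact Or.inr w3.end_mem_support
    exact hpv (J1 v h this).symm
  have unotw3 : u ∉ w3.support := by
    intro h
    have : u ∈ (w2.append w3).support := by
      rw [Walk.mem_support_append_iff]
      exact Or.inr h
    exact hpu (J1 u w1.start_mem_support this).symm
  have pq3 : ∀ w, w ∈ w1.support → w ∈ w3.support → False := by
    intro w hw hw'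
    have hwp : w = p := J1 w hw (by rw [Walk.mem_support_append_iff]; exact Or.inr hw')
    subst hwp
    exact hpq (J2 w w2.start_mem_support hw')
  refine ⟨?_, ?_, ?_⟩
  · refine isPath_append' hw1.reverse ?_ ?_
    · refine isPath_append' hN hw3.reverse ?_
      intro w hw hw'
      rw [mem_rev_support] at hw'
      rcases hdPN w (hw3P w hw') hw with h | h
      · exact absurd (h ▸ hw') unotw3
      · exact h
    · intro w hw hw'
      rw [mem_rev_support] at hw
      rw [Walk.mem_support_append_iff] at hw'
      rcases hw' with h | h
      · rcases hdPN w (hw1P w hw) h with h1 | h1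
        · exact h1
        · exact absurd (h1 ▸ hw) vnotw1
      · rw [mem_rev_support] at h
        exact (pq3 w hw h).elim
  · intro z hz
    rw [Walk.mem_support_append_iff, Walk.mem_support_append_iff] at hz
    rcases hz with h | h | h
    · rw [mem_rev_support] at h
      exact Or.inl (hw1P z h)
    · exact Or.inr h
    · rw [mem_rev_support] at h
      exact Or.inl (hw3P z h)
  · rw [Walk.support_append, Walk.tail_support_append]

lemma MLsame2 (hab : u ≠ v) {p q : V}
    {w1 : G.Walk u p} {w2 : G.Walk p q} {w3 : G.Walk q v} {N N' : G.Walk u v}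
    (hP : (w1.append (w2.append w3)).IsPath) (hN : N.IsPath) (hN' : N'.IsPath)
    (hNT : ∀ z ∈ N.support, z ∈ T → z = u ∨ z = v)
    (hN'T : ∀ z ∈ N'.support, z ∈ T → z = u ∨ z = v)
    (hdPN : ∀ z, z ∈ (w1.append (w2.append w3)).support → z ∈ N.support → z = u ∨ z = v)
    (hdPN' : ∀ z, z ∈ (w1.append (w2.append w3)).support → z ∈ N'.support → z = u ∨ z = v)
    (hdNN' : ∀ z, z ∈ N.support → z ∈ N'.support → z = u ∨ z = v)
    (hNN' : N ≠ N')
    (hpu : p ≠ u) (hpv : p ≠ v) (hqu : q ≠ u) (hqv : q ≠ v) (hpq : p ≠ q) :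
    ∃ R1 R2 : G.Walk p q, R1.IsPath ∧ R2.IsPath ∧
      (∀ z ∈ R1.support, z ∈ (w1.append (w2.append w3)).support ∨ z ∈ N.support ∨ z ∈ N'.support) ∧
      (∀ z ∈ R2.support, z ∈ (w1.append (w2.append w3)).support ∨ z ∈ N.support ∨ z ∈ N'.support) ∧
      R1.support.filter (· ∈ T) = R2.support.filter (· ∈ T) ∧
      R1.support ≠ R2.support := by
  obtain ⟨hp1, hs1, hd1⟩ := RMshape hab hP hN hdPN hpu hpv hqu hqv hpq
  obtain ⟨hp2, hs2, hd2⟩ := RMshape hab hP hN' hdPN' hpu hpv hqu hqv hpq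
  refine ⟨_, _, hp1, hp2, ?_, ?_, ?_, ?_⟩
  · intro z hz
    rcases hs1 z hz with h | h
    · exact Or.inl h
    · exact Or.inr (Or.inl h)
  · intro z hz
    rcases hs2 z hz with h | h
    · exact Or.inl h
    · exact Or.inr (Or.inr h)
  · rw [hd1, hd2, List.filter_append, List.filter_append,
      List.filter_append, List.filter_append,
      trace_tail_good hab N hN hNT, trace_tail_good hab N' hN' hN'T]
  · obtain ⟨w, hw⟩ := good_witness hab hN hN' hdNN' hNN'
    rcases hw with ⟨hwN, hwN', hwu, hwv⟩ | ⟨hwN', hwN, hwu, hwv⟩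
    · have hwP : w ∉ (w1.append (w2.append w3)).support := fun h => by
        rcases hdPN w h hwN with h1 | h1
        · exact hwu h1
        · exact hwv h1
      intro hEq
      have hmem : w ∈ (w1.reverse.append (N.append w3.reverse)).support := by
        rw [Walk.mem_support_append_iff, Walk.mem_support_append_iff]
        right; left
        exact hwN
      rw [hEq] at hmem
      rcases hs2 w hmem with h | h
      · exact hwP h
      · exact hwN' h
    · have hwP : w ∉ (w1.append (w2.append w3)).support := fun h => by
        rcases hdPN' w h hwN' with h1 | h1
        · exact hwu h1
        · exact hwv h1
      intro hEq
      have hmem : w ∈ (w1.reverse.append (N'.append w3.reverse)).support := by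
        rw [Walk.mem_support_append_iff, Walk.mem_support_append_iff]
        right; left
        exact hwN'
      rw [← hEq] at hmem
      rcases hs1 w hmem with h | h
      · exact hwP h
      · exact hwN h

lemma MLsame0 (hab : u ≠ v) (huT : u ∉ T) (hvT : v ∉ T) {p q : V}
    {w1 : G.Walk u p} {w2 : G.Walk p q} {w3 : G.Walk q v} {N : G.Walk u v}
    (hP : (w1.append (w2.append w3)).IsPath) (hN : N.IsPath)
    (hPT : ∀ z ∈ (w1.append (w2.append w3)).support, z ∈ T → z = u ∨ z = v)
    (hNT : ∀ z ∈ N.support, z ∈ T → z = u ∨ z = v)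
    (hdPN : ∀ z, z ∈ (w1.append (w2.append w3)).support → z ∈ N.support → z = u ∨ z = v)
    (hpu : p ≠ u) (hpv : p ≠ v) (hqu : q ≠ u) (hqv : q ≠ v) (hpq : p ≠ q) :
    ∃ R1 R2 : G.Walk p q, R1.IsPath ∧ R2.IsPath ∧
      (∀ z ∈ R1.support, z ∈ (w1.append (w2.append w3)).support ∨ z ∈ N.support) ∧
      (∀ z ∈ R2.support, z ∈ (w1.append (w2.append w3)).support ∨ z ∈ N.support) ∧
      R1.support.filter (· ∈ T) = R2.support.filter (· ∈ T) ∧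
      R1.support ≠ R2.support := by
  obtain ⟨hp2, hs2, _⟩ := RMshape hab hP hN hdPN hpu hpv hqu hqv hpq
  have h23 : (w2.append w3).IsPath := Walk.IsPath.of_append_right hP
  have hw2 : w2.IsPath := Walk.IsPath.of_append_left h23
  have J1 : ∀ w, w ∈ w1.support → w ∈ (w2.append w3).support → w = p :=
    inter_of_isPath_append hP
  have hw2P : ∀ z ∈ w2.support, z ∈ (w1.append (w2.append w3)).support := by
    intro z hz
    rw [Walk.mem_support_append_iff, Walk.mem_support_append_iff]
    exact Or.inr (Or.inl hz)
  have unotw2 : u ∉ w2.support := by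
    intro h
    have : u ∈ (w2.append w3).support := by
      rw [Walk.mem_support_append_iff]
      exact Or.inl h
    exact hpu (J1 u w1.start_mem_support this).symm
  have key : ∀ z, (z ∈ (w1.append (w2.append w3)).support ∨ z ∈ N.support) → z ∉ T := by
    rintro z (hz | hz) hzT
    · rcases hPT z hz hzT with h | h
      · exact huT (h ▸ hzT)
      · exact hvT (h ▸ hzT)
    · rcases hNT z hz hzT with h | h
      · exact huT (h ▸ hzT)
      · exact hvT (h ▸ hzT)
  refine ⟨w2, _, hw2, hp2, (fun z hz => Or.inl (hw2P z hz)), hs2, ?_, ?_⟩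
  · rw [filt_nil _ (fun z hz => key z (Or.inl (hw2P z hz))),
      filt_nil _ (fun z hz => key z (hs2 z hz))]
  · intro hEq
    have : u ∈ (w1.reverse.append (N.append w3.reverse)).support := by
      rw [Walk.mem_support_append_iff, Walk.mem_support_append_iff]
      right; left
      exact N.start_mem_support
    rw [← hEq] at this
    exact unotw2 this


lemma split3 {a b : V} (P : G.Walk a b) {x y : V} (hx : x ∈ P.support)
    (hy : y ∈ P.support) (hxy : x ≠ y) :
    ∃ (p q : V) (w1 : G.Walk a p) (w2 : G.Walk p q) (w3 : G.Walk q b),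
      w1.append (w2.append w3) = P ∧ ((p = x ∧ q = y) ∨ (p = y ∧ q = x)) := by
  by_cases h : y ∈ (P.dropUntil x hx).support
  · refine ⟨x, y, P.takeUntil x hx, (P.dropUntil x hx).takeUntil y h,
      (P.dropUntil x hx).dropUntil y h, ?_, Or.inl ⟨rfl, rfl⟩⟩
    rw [(P.dropUntil x hx).take_spec h]
    exact P.take_spec hx
  · have h' : y ∈ (P.takeUntil x hx).support := by
      have h0 := hy
      rw [← P.take_spec hx, Walk.mem_support_append_iff] at h0
      rcases h0 with h0 | h0
      · exact h0
      · exact absurd h0 h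
    refine ⟨y, x, (P.takeUntil x hx).takeUntil y h', (P.takeUntil x hx).dropUntil y h',
      P.dropUntil x hx, ?_, Or.inr ⟨rfl, rfl⟩⟩
    have h0 : (((P.takeUntil x hx).takeUntil y h').append ((P.takeUntil x hx).dropUntil y h')).append
        (P.dropUntil x hx) = P := by
      rw [(P.takeUntil x hx).take_spec h']
      exact P.take_spec hx
    rw [Walk.append_assoc]
    exact h0

lemma tail_filter_eq {x : V} {t1 t2 : List V} (h : (x::t1).filter (· ∈ T) = (x::t2).filter (· ∈ T)) :
    t1.filter (· ∈ T) = t2.filter (· ∈ T) := by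
  by_cases hx : x ∈ T
  · rw [List.filter_cons_of_pos (by simpa using hx), List.filter_cons_of_pos (by simpa using hx)] at h
    injection h with _ h2
  · rw [List.filter_cons_of_neg (by simpa using hx), List.filter_cons_of_neg (by simpa using hx)] at h
    exact h

lemma glue {s t x y : V}
    (hTr : ∀ p q : G.Path s t,
      p.1.support.filter (· ∈ T) = q.1.support.filter (· ∈ T) → p = q)
    (Qs : G.Walk s x) (Qm : G.Walk x y) (Qt : G.Walk y t)
    (hQ : (Qs.append (Qm.append Qt)).IsPath)
    (D : Set V)
    (hQsclean : ∀ w ∈ Qs.support, w ∈ D → w = x)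
    (hQtclean : ∀ w ∈ Qt.support, w ∈ D → w = y)
    (R1 R2 : G.Walk x y) (hR1 : R1.IsPath) (hR2 : R2.IsPath)
    (hR1D : ∀ z ∈ R1.support, z ∈ D) (hR2D : ∀ z ∈ R2.support, z ∈ D)
    (htr : R1.support.filter (· ∈ T) = R2.support.filter (· ∈ T))
    (hne : R1.support ≠ R2.support) : False := by
  have hQs : Qs.IsPath := Walk.IsPath.of_append_left hQ
  have hMT : (Qm.append Qt).IsPath := Walk.IsPath.of_append_right hQ
  have hQt : Qt.IsPath := Walk.IsPath.of_append_right hMT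
  have JQ : ∀ w, w ∈ Qs.support → w ∈ (Qm.append Qt).support → w = x :=
    inter_of_isPath_append hQ
  have build : ∀ (R : G.Walk x y), R.IsPath → (∀ z ∈ R.support, z ∈ D) →
      (Qs.append (R.append Qt)).IsPath := by
    intro R hR hRD
    have hinner : (R.append Qt).IsPath := by
      refine isPath_append' hR hQt ?_
      intro w hw hw'
      exact hQtclean w hw' (hRD w hw)
    refine isPath_append' hQs hinner ?_
    intro w hw hw'
    rw [Walk.mem_support_append_iff] at hw'
    rcases hw' with h | h
    · exact hQsclean w hw (hRD w h)
    · exact JQ w hw (by rw [Walk.mem_support_append_iff]; exact Or.inr h)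
  have hW1 := build R1 hR1 hR1D
  have hW2 := build R2 hR2 hR2D
  have decomp : ∀ (R : G.Walk x y),
      (Qs.append (R.append Qt)).support = Qs.support ++ (R.support.tail ++ Qt.support.tail) := by
    intro R
    rw [Walk.support_append, Walk.tail_support_append]
  have htail : R1.support.tail.filter (· ∈ T) = R2.support.tail.filter (· ∈ T) := by
    apply tail_filter_eq (x := x)
    rw [← R1.support_eq_cons, ← R2.support_eq_cons]
    exact htr
  have hpeq : (⟨_, hW1⟩ : G.Path s t) = ⟨_, hW2⟩ := by
    apply hTr
    simp only [decomp R1, decomp R2, List.filter_append]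
    rw [htail]
  have hweq : Qs.append (R1.append Qt) = Qs.append (R2.append Qt) := congrArg Subtype.val hpeq
  have hseq := congrArg Walk.support hweq
  rw [decomp R1, decomp R2] at hseq
  have h1 : R1.support.tail ++ Qt.support.tail = R2.support.tail ++ Qt.support.tail :=
    List.append_cancel_left hseq
  have h2 : R1.support.tail = R2.support.tail := List.append_cancel_right h1
  apply hne
  rw [R1.support_eq_cons, R2.support_eq_cons, h2]

lemma pick_avoid {ι : Type*} [DecidableEq ι] (Gd s : Finset ι) (h : s.card + 1 ≤ Gd.card) :
    ∃ i ∈ Gd, i ∉ s := by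
  have h1 := Finset.le_card_sdiff s Gd
  have h2 : 0 < (Gd \ s).card := by omega
  obtain ⟨i, hi⟩ := Finset.card_pos.mp h2
  exact ⟨i, (Finset.mem_sdiff.mp hi).1, (Finset.mem_sdiff.mp hi).2⟩

end AuxTrackingProof

/-- A tracking set for an s-t graph: any two distinct s-t paths yield different
sequences of vertices of `T`. -/
def IsTrackingSet {V : Type*} [DecidableEq V] (G : SimpleGraph V) (s t : V)
    (T : Finset V) : Prop :=
  ∀ p q : G.Path s t,
    p.1.support.filter (· ∈ T) = q.1.support.filter (· ∈ T) → p = q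

/-- if `G` has a tracking set of size at most `k` (and every
vertex/edge is on some s-t path), then any family of pairwise internally
vertex-disjoint `u`-`v` paths has at most `k + 1` members. -/
theorem disjoint_paths_le_k_add_one {V : Type*} [DecidableEq V]
    (G : SimpleGraph V) (s t : V) (k : ℕ)
    (hpartV : ∀ v : V, ∃ p : G.Path s t, v ∈ p.1.support)
    (hpartE : ∀ e ∈ G.edgeSet, ∃ p : G.Path s t, e ∈ p.1.edges)
    (hTk : ∃ T : Finset V, IsTrackingSet G s t T ∧ T.card ≤ k)
    (u v : V) (m : ℕ) (P : Fin m → G.Walk u v) (hP : ∀ i, (P i).IsPath)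
    (hinj : Function.Injective P)
    (hPdisj : ∀ i j, i ≠ j → ∀ w, w ∈ (P i).support → w ∈ (P j).support →
      w = u ∨ w = v) :
    m ≤ k + 1 := by
  classical
  by_contra hcon
  push_neg at hcon
  obtain ⟨T, hTr, hTk⟩ := hTk
  by_cases huv : u = v
  · subst huv
    have hm2 : 2 ≤ m := by omega
    have h01 : (⟨0, by omega⟩ : Fin m) ≠ ⟨1, by omega⟩ := by
      simp [Fin.ext_iff]
    apply h01
    apply hinj
    rw [Walk.isPath_iff_eq_nil.1 (hP _), Walk.isPath_iff_eq_nil.1 (hP _)]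
  -- counting good paths
  set Good : Finset (Fin m) :=
    Finset.univ.filter (fun i => ∀ z ∈ (P i).support, z ∈ T → z = u ∨ z = v) with hGooddef
  have hGoodP : ∀ i ∈ Good, ∀ z ∈ (P i).support, z ∈ T → z = u ∨ z = v := by
    intro i hi
    exact (Finset.mem_filter.mp hi).2
  have hne' : ∀ {i j : Fin m}, i ≠ j → P i ≠ P j := by
    intro i j hij hh
    exact hij (hinj hh)
  have hGoodCard : 2 + (T ∩ {u, v}).card ≤ Good.card := by
    set Bad : Finset (Fin m) :=
      Finset.univ.filter (fun i => ¬ ∀ z ∈ (P i).support, z ∈ T → z = u ∨ z = v) with hBaddef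
    have hwit : ∀ i ∈ Bad, ∃ z, z ∈ (P i).support ∧ z ∈ T ∧ z ≠ u ∧ z ≠ v := by
      intro i hi
      have := (Finset.mem_filter.mp hi).2
      push_neg at this
      obtain ⟨z, hz1, hz2, hz3⟩ := this
      exact ⟨z, hz1, hz2, hz3.1, hz3.2⟩
    have hBadCard : Bad.card ≤ (T \ {u, v}).card := by
      apply Finset.card_le_card_of_injOn
        (fun i => if h : ∃ z, z ∈ (P i).support ∧ z ∈ T ∧ z ≠ u ∧ z ≠ v then h.choose else u)
      · intro i hi
        obtain he := hwit i hi
        simp only [dif_pos he]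
        obtain ⟨h1, h2, h3, h4⟩ := he.choose_spec
        rw [Finset.mem_coe, Finset.mem_sdiff]
        refine ⟨h2, ?_⟩
        simp only [Finset.mem_insert, Finset.mem_singleton]
        tauto
      · intro i hi j hj hij
        by_contra hne
        obtain hei := hwit i (by simpa using hi)
        obtain hej := hwit j (by simpa using hj)
        simp only [dif_pos hei, dif_pos hej] at hij
        obtain ⟨hi1, hi2, hi3, hi4⟩ := hei.choose_spec
        obtain ⟨hj1, hj2, hj3, hj4⟩ := hej.choose_spec
        rcases hPdisj i j hne _ hi1 (hij ▸ hj1) with h | h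
        · exact hi3 h
        · exact hi4 h
    have hsum : Good.card + Bad.card = m := by
      rw [hGooddef, hBaddef]
      rw [Finset.card_filter_add_card_filter_not]
      simp
    have hTsplit : (T ∩ {u, v}).card + (T \ {u, v}).card = T.card :=
      Finset.card_inter_add_card_sdiff T {u, v}
    omega
  have hGood2 : 2 ≤ Good.card := by omega
  have hWu : u ∈ T → 1 ≤ (T ∩ ({u, v} : Finset V)).card := by
    intro h
    exact Finset.card_pos.mpr ⟨u, Finset.mem_inter.mpr ⟨h, by simp⟩⟩
  have hWv : v ∈ T → 1 ≤ (T ∩ ({u, v} : Finset V)).card := by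
    intro h
    exact Finset.card_pos.mpr ⟨v, Finset.mem_inter.mpr ⟨h, by simp⟩⟩
  have hWuv : u ∈ T → v ∈ T → 2 ≤ (T ∩ ({u, v} : Finset V)).card := by
    intro h1 h2
    have : ({u, v} : Finset V) ⊆ T ∩ {u, v} := by
      intro z hz
      rcases Finset.mem_insert.mp hz with h | h
      · subst h; exact Finset.mem_inter.mpr ⟨h1, by simp⟩
      · rw [Finset.mem_singleton] at h; subst h; exact Finset.mem_inter.mpr ⟨h2, by simp⟩
    have := Finset.card_le_card this
    rwa [Finset.card_insert_of_notMem (by simpa using huv), Finset.card_singleton] at this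
  -- the structure set D
  set D : Set V := {w | ∃ i ∈ Good, w ∈ (P i).support} with hDdef
  have hDmem : ∀ i ∈ Good, ∀ z ∈ (P i).support, z ∈ D := by
    intro i hi z hz
    exact ⟨i, hi, hz⟩
  -- get an edge of a good path, and an s-t path through it
  obtain ⟨iE, hiE⟩ := Finset.card_pos.mp (by omega : 0 < Good.card)
  have huD : u ∈ D := hDmem iE hiE u (P iE).start_mem_support
  obtain ⟨c, hcD, hadj, hcne⟩ : ∃ c, c ∈ D ∧ G.Adj u c ∧ u ≠ c := by
    cases hPE : P iE with
    | nil => exact absurd rfl huv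
    | @cons _ c _ hadj rest =>
      refine ⟨c, ?_, hadj, hadj.ne⟩
      apply hDmem iE hiE
      rw [hPE]
      rw [Walk.support_cons]
      exact List.mem_cons_of_mem _ rest.start_mem_support
  obtain ⟨Qp, hQe⟩ := hpartE s(u, c) hadj
  have hQpath := Qp.2
  have hd1 : u ∈ Qp.1.support := Walk.fst_mem_support_of_mem_edges _ hQe
  have hd2 : c ∈ Qp.1.support := Walk.snd_mem_support_of_mem_edges _ hQe
  obtain ⟨x, Qs, Qrest, hQd, hxD, hQsclean⟩ := exists_first_split D Qp.1 ⟨u, hd1, huD⟩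
  obtain ⟨y, Qm, Qt, hQd2, hyD, hQtclean⟩ :=
    exists_last_split D Qrest ⟨x, Qrest.start_mem_support, hxD⟩
  have hQfull : Qp.1 = Qs.append (Qm.append Qt) := by rw [hQd, hQd2]
  have hQLpath : (Qs.append (Qm.append Qt)).IsPath := hQfull ▸ hQpath
  have hxy : x ≠ y := by
    intro hxyeq
    subst hxyeq
    have hQm : Qm.IsPath :=
      Walk.IsPath.of_append_left (Walk.IsPath.of_append_right hQLpath)
    have hQmnil : Qm = Walk.nil := Walk.isPath_iff_eq_nil.1 hQm
    have hclean : ∀ w ∈ Qp.1.support, w ∈ D → w = x := by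
      intro w hw hwD
      rw [hQfull, Walk.mem_support_append_iff, Walk.mem_support_append_iff] at hw
      rcases hw with h | h | h
      · exact hQsclean w h hwD
      · rw [hQmnil] at h
        simpa using h
      · exact hQtclean w h hwD
    exact hcne ((hclean u hd1 huD).trans (hclean c hd2 hcD).symm)
  -- finishing move
  have finish : ∀ (R1 R2 : G.Walk x y), R1.IsPath → R2.IsPath →
      (∀ z ∈ R1.support, z ∈ D) → (∀ z ∈ R2.support, z ∈ D) →
      R1.support.filter (· ∈ T) = R2.support.filter (· ∈ T) →
      R1.support ≠ R2.support → False :=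
    fun R1 R2 h1 h2 h3 h4 h5 h6 =>
      glue hTr Qs Qm Qt hQLpath D hQsclean hQtclean R1 R2 h1 h2 h3 h4 h5 h6
  obtain ⟨iA0, hiA0, hxA0⟩ := hxD
  obtain ⟨iB0, hiB0, hyB0⟩ := hyD
  have hmemuv : ∀ i ∈ Good, ∀ w, (w = u ∨ w = v) → w ∈ (P i).support := by
    rintro i hi w (h | h)
    · subst h; exact (P i).start_mem_support
    · subst h; exact (P i).end_mem_support
  have hsetup : (∃ iA ∈ Good, ∃ iB ∈ Good, iA ≠ iB ∧ x ∈ (P iA).support ∧ y ∈ (P iB).support)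
      ∨ (∃ i ∈ Good, x ∈ (P i).support ∧ y ∈ (P i).support ∧
          x ≠ u ∧ x ≠ v ∧ y ≠ u ∧ y ≠ v) := by
    by_cases hxuv : x = u ∨ x = v
    · obtain ⟨iA, hiA, hiAne⟩ := pick_avoid Good {iB0}
        (by rw [Finset.card_singleton]; omega)
      exact Or.inl ⟨iA, hiA, iB0, hiB0, by simpa using hiAne,
        hmemuv iA hiA x hxuv, hyB0⟩
    · by_cases hyuv : y = u ∨ y = v
      · obtain ⟨iB, hiB, hiBne⟩ := pick_avoid Good {iA0}
          (by rw [Finset.card_singleton]; omega)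
        refine Or.inl ⟨iA0, hiA0, iB, hiB, ?_, hxA0, hmemuv iB hiB y hyuv⟩
        intro h
        have hiBne' : iB ≠ iA0 := by simpa using hiBne
        exact hiBne' h.symm
      · push_neg at hxuv hyuv
        by_cases hABeq : iA0 = iB0
        · exact Or.inr ⟨iA0, hiA0, hxA0, hABeq ▸ hyB0,
            hxuv.1, hxuv.2, hyuv.1, hyuv.2⟩
        · exact Or.inl ⟨iA0, hiA0, iB0, hiB0, hABeq, hxA0, hyB0⟩
  have hfin : ∃ R1 R2 : G.Walk x y, (R1.IsPath ∧ R2.IsPath) ∧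
      (∀ z ∈ R1.support, z ∈ D) ∧ (∀ z ∈ R2.support, z ∈ D) ∧
      R1.support.filter (· ∈ T) = R2.support.filter (· ∈ T) ∧
      R1.support ≠ R2.support := by
    rcases hsetup with ⟨iA, hiA, iB, hiB, hABne, hxA, hyB⟩ |
      ⟨i0, hi0, hxP, hyP, hxu, hxv, hyu, hyv⟩
    · -- different paths case
      have hAT := hGoodP iA hiA
      have hBT := hGoodP iB hiB
      have hdAB := hPdisj iA iB hABne
      have hxrA : x ∈ (P iA).reverse.support := (mem_rev_support _).mpr hxA
      have hyrB : y ∈ (P iB).reverse.support := (mem_rev_support _).mpr hyB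
      by_cases huT : u ∈ T
      · by_cases hvT : v ∈ T
        · -- both trackers : two middles
          have hc4 : 4 ≤ Good.card := by
            have := hWuv huT hvT
            omega
          obtain ⟨iM, hiM, hiMne⟩ := pick_avoid Good {iA, iB} (by
            have h1 := Finset.card_insert_le iA ({iB} : Finset (Fin m))
            rw [Finset.card_singleton] at h1
            omega)
          obtain ⟨iM', hiM', hiM'ne⟩ := pick_avoid Good {iA, iB, iM} (by
            have h1 := Finset.card_insert_le iA ({iB, iM} : Finset (Fin m))
            have h2 := Finset.card_insert_le iB ({iM} : Finset (Fin m))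
            rw [Finset.card_singleton] at h2
            omega)
          simp only [Finset.mem_insert, Finset.mem_singleton, not_or] at hiMne hiM'ne
          obtain ⟨hMA, hMB⟩ := hiMne
          obtain ⟨hM'A, hM'B, hM'M⟩ := hiM'ne
          have hMM' : iM ≠ iM' := fun h => hM'M h.symm
          by_cases hori : x = v ∨ y = u
          · -- swapped orientation
            have hxu : x ≠ u := by
              intro hh
              rcases hori with h | h
              · exact huv (hh.symm.trans h)
              · exact hxy (hh.trans h.symm)
            have hyv : y ≠ v := by
              intro hh
              rcases hori with h | h
              · exact hxy (h.trans hh.symm)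
              · exact huv (h.symm.trans hh)
            have hrevne : (P iM).reverse ≠ (P iM').reverse := by
              intro h
              exact (hne' hMM') (by
                rw [← Walk.reverse_reverse (P iM), h, Walk.reverse_reverse])
            obtain ⟨R1, R2, hp1, hp2, hs1, hs2, htr, hne⟩ :=
              MLdiff2 (u := v) (v := u) (Ne.symm huv) huT
                (hP iA).reverse (hP iB).reverse (hP iM).reverse (hP iM').reverse
                (fun z hz hzT => (hGoodP iM hiM z ((mem_rev_support _).mp hz) hzT).symm)
                (fun z hz hzT => (hGoodP iM' hiM' z ((mem_rev_support _).mp hz) hzT).symm)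
                (fun z hz hz' => (hdAB z ((mem_rev_support _).mp hz)
                  ((mem_rev_support _).mp hz')).symm)
                (fun z hz hz' => (hPdisj iA iM (fun h => hMA h.symm) z
                  ((mem_rev_support _).mp hz) ((mem_rev_support _).mp hz')).symm)
                (fun z hz hz' => (hPdisj iB iM (fun h => hMB h.symm) z
                  ((mem_rev_support _).mp hz) ((mem_rev_support _).mp hz')).symm)
                (fun z hz hz' => (hPdisj iA iM' (fun h => hM'A h.symm) z
                  ((mem_rev_support _).mp hz) ((mem_rev_support _).mp hz')).symm)
                (fun z hz hz' => (hPdisj iB iM' (fun h => hM'B h.symm) z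
                  ((mem_rev_support _).mp hz) ((mem_rev_support _).mp hz')).symm)
                (fun z hz hz' => (hPdisj iM iM' hMM' z
                  ((mem_rev_support _).mp hz) ((mem_rev_support _).mp hz')).symm)
                hrevne hxrA hyrB hxu hyv
            refine ⟨R1, R2, ⟨hp1, hp2⟩, ?_, ?_, htr, hne⟩
            · intro z hz
              rcases hs1 z hz with h | h | h | h
              · exact hDmem iA hiA z ((mem_rev_support _).mp h)
              · exact hDmem iB hiB z ((mem_rev_support _).mp h)
              · exact hDmem iM hiM z ((mem_rev_support _).mp h)
              · exact hDmem iM' hiM' z ((mem_rev_support _).mp h)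
            · intro z hz
              rcases hs2 z hz with h | h | h | h
              · exact hDmem iA hiA z ((mem_rev_support _).mp h)
              · exact hDmem iB hiB z ((mem_rev_support _).mp h)
              · exact hDmem iM hiM z ((mem_rev_support _).mp h)
              · exact hDmem iM' hiM' z ((mem_rev_support _).mp h)
          · push_neg at hori
            obtain ⟨R1, R2, hp1, hp2, hs1, hs2, htr, hne⟩ :=
              MLdiff2 huv hvT (hP iA) (hP iB) (hP iM) (hP iM')
                (hGoodP iM hiM) (hGoodP iM' hiM')
                hdAB (hPdisj iA iM (fun h => hMA h.symm))
                (hPdisj iB iM (fun h => hMB h.symm))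
                (hPdisj iA iM' (fun h => hM'A h.symm))
                (hPdisj iB iM' (fun h => hM'B h.symm))
                (hPdisj iM iM' hMM') (hne' hMM') hxA hyB hori.1 hori.2
            refine ⟨R1, R2, ⟨hp1, hp2⟩, ?_, ?_, htr, hne⟩
            · intro z hz
              rcases hs1 z hz with h | h | h | h
              · exact hDmem iA hiA z h
              · exact hDmem iB hiB z h
              · exact hDmem iM hiM z h
              · exact hDmem iM' hiM' z h
            · intro z hz
              rcases hs2 z hz with h | h | h | h
              · exact hDmem iA hiA z h
              · exact hDmem iB hiB z h
              · exact hDmem iM hiM z h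
              · exact hDmem iM' hiM' z h
        · -- only u tracker
          have hc3 : 3 ≤ Good.card := by
            have := hWu huT
            omega
          obtain ⟨iM, hiM, hiMne⟩ := pick_avoid Good {iA, iB} (by
            have h1 := Finset.card_insert_le iA ({iB} : Finset (Fin m))
            rw [Finset.card_singleton] at h1
            omega)
          simp only [Finset.mem_insert, Finset.mem_singleton, not_or] at hiMne
          obtain ⟨hMA, hMB⟩ := hiMne
          have hTall : ∀ z, (z ∈ (P iA).support ∨ z ∈ (P iB).support ∨ z ∈ (P iM).support) →
              z ∈ T → z = u := by
            rintro z (hz | hz | hz) hzT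
            · rcases hAT z hz hzT with h | h
              · exact h
              · exact absurd (h ▸ hzT) hvT
            · rcases hBT z hz hzT with h | h
              · exact h
              · exact absurd (h ▸ hzT) hvT
            · rcases hGoodP iM hiM z hz hzT with h | h
              · exact h
              · exact absurd (h ▸ hzT) hvT
          obtain ⟨R1, R2, hp1, hp2, hs1, hs2, htr, hne⟩ :=
            MLdiff1 huv huT hvT (hP iA) (hP iB) (hP iM)
              hdAB (hPdisj iA iM (fun h => hMA h.symm))
              (hPdisj iB iM (fun h => hMB h.symm))
              (hne' (fun h => hMA h.symm)) (hne' (fun h => hMB h.symm))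
              hTall hxA hyB hxy
          refine ⟨R1, R2, ⟨hp1, hp2⟩, ?_, ?_, htr, hne⟩
          · intro z hz
            rcases hs1 z hz with h | h | h
            · exact hDmem iA hiA z h
            · exact hDmem iB hiB z h
            · exact hDmem iM hiM z h
          · intro z hz
            rcases hs2 z hz with h | h | h
            · exact hDmem iA hiA z h
            · exact hDmem iB hiB z h
            · exact hDmem iM hiM z h
      · by_cases hvT : v ∈ T
        · -- only v tracker : swapped MLdiff1
          have hc3 : 3 ≤ Good.card := by
            have := hWv hvT
            omega
          obtain ⟨iM, hiM, hiMne⟩ := pick_avoid Good {iA, iB} (by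
            have h1 := Finset.card_insert_le iA ({iB} : Finset (Fin m))
            rw [Finset.card_singleton] at h1
            omega)
          simp only [Finset.mem_insert, Finset.mem_singleton, not_or] at hiMne
          obtain ⟨hMA, hMB⟩ := hiMne
          have hTall : ∀ z, (z ∈ (P iA).reverse.support ∨ z ∈ (P iB).reverse.support ∨
              z ∈ (P iM).reverse.support) → z ∈ T → z = v := by
            rintro z (hz | hz | hz) hzT
            · rcases hAT z ((mem_rev_support _).mp hz) hzT with h | h
              · exact absurd (h ▸ hzT) huT
              · exact h
            · rcases hBT z ((mem_rev_support _).mp hz) hzT with h | h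
              · exact absurd (h ▸ hzT) huT
              · exact h
            · rcases hGoodP iM hiM z ((mem_rev_support _).mp hz) hzT with h | h
              · exact absurd (h ▸ hzT) huT
              · exact h
          have hrevA : (P iA).reverse ≠ (P iM).reverse := by
            intro h
            exact (hne' (fun h0 => hMA h0.symm)) (by
              rw [← Walk.reverse_reverse (P iA), h, Walk.reverse_reverse])
          have hrevB : (P iB).reverse ≠ (P iM).reverse := by
            intro h
            exact (hne' (fun h0 => hMB h0.symm)) (by
              rw [← Walk.reverse_reverse (P iB), h, Walk.reverse_reverse])
          obtain ⟨R1, R2, hp1, hp2, hs1, hs2, htr, hne⟩ :=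
            MLdiff1 (u := v) (v := u) (Ne.symm huv) hvT huT
              (hP iA).reverse (hP iB).reverse (hP iM).reverse
              (fun z hz hz' => (hdAB z ((mem_rev_support _).mp hz)
                ((mem_rev_support _).mp hz')).symm)
              (fun z hz hz' => (hPdisj iA iM (fun h => hMA h.symm) z
                ((mem_rev_support _).mp hz) ((mem_rev_support _).mp hz')).symm)
              (fun z hz hz' => (hPdisj iB iM (fun h => hMB h.symm) z
                ((mem_rev_support _).mp hz) ((mem_rev_support _).mp hz')).symm)
              hrevA hrevB hTall hxrA hyrB hxy
          refine ⟨R1, R2, ⟨hp1, hp2⟩, ?_, ?_, htr, hne⟩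
          · intro z hz
            rcases hs1 z hz with h | h | h
            · exact hDmem iA hiA z ((mem_rev_support _).mp h)
            · exact hDmem iB hiB z ((mem_rev_support _).mp h)
            · exact hDmem iM hiM z ((mem_rev_support _).mp h)
          · intro z hz
            rcases hs2 z hz with h | h | h
            · exact hDmem iA hiA z ((mem_rev_support _).mp h)
            · exact hDmem iB hiB z ((mem_rev_support _).mp h)
            · exact hDmem iM hiM z ((mem_rev_support _).mp h)
        · -- no trackers among u,v
          obtain ⟨R1, R2, hp1, hp2, hs1, hs2, htr, hne⟩ :=
            MLdiff0 huv huT hvT (hP iA) (hP iB) hAT hBT hdAB (hne' hABne) hxA hyB hxy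
          refine ⟨R1, R2, ⟨hp1, hp2⟩, ?_, ?_, htr, hne⟩
          · intro z hz
            rcases hs1 z hz with h | h
            · exact hDmem iA hiA z h
            · exact hDmem iB hiB z h
          · intro z hz
            rcases hs2 z hz with h | h
            · exact hDmem iA hiA z h
            · exact hDmem iB hiB z h
    · -- same path case
      obtain ⟨p, q, w1, w2, w3, heq, hpos⟩ := split3 (P i0) hxP hyP hxy
      have hPfull : (w1.append (w2.append w3)).IsPath := by
        rw [heq]
        exact hP i0
      have hPsup : ∀ z, z ∈ (w1.append (w2.append w3)).support → z ∈ (P i0).support := by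
        intro z hz
        rwa [heq] at hz
      have hposf : (p ≠ u ∧ p ≠ v ∧ q ≠ u ∧ q ≠ v ∧ p ≠ q) := by
        rcases hpos with ⟨h1, h2⟩ | ⟨h1, h2⟩
        · subst h1; subst h2; exact ⟨hxu, hxv, hyu, hyv, hxy⟩
        · subst h1; subst h2; exact ⟨hyu, hyv, hxu, hxv, hxy.symm⟩
      obtain ⟨hpu, hpv, hqu, hqv, hpq⟩ := hposf
      have hcore : ∃ R1 R2 : G.Walk p q, (R1.IsPath ∧ R2.IsPath) ∧
          (∀ z ∈ R1.support, z ∈ D) ∧ (∀ z ∈ R2.support, z ∈ D) ∧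
          R1.support.filter (· ∈ T) = R2.support.filter (· ∈ T) ∧
          R1.support ≠ R2.support := by
        by_cases hc3 : 3 ≤ Good.card
        · obtain ⟨iN, hiN, hiNne⟩ := pick_avoid Good {i0}
            (by rw [Finset.card_singleton]; omega)
          obtain ⟨iN', hiN', hiN'ne⟩ := pick_avoid Good {i0, iN} (by
            have h1 := Finset.card_insert_le i0 ({iN} : Finset (Fin m))
            rw [Finset.card_singleton] at h1
            omega)
          simp only [Finset.mem_singleton] at hiNne
          simp only [Finset.mem_insert, Finset.mem_singleton, not_or] at hiN'ne
          obtain ⟨hN'0, hN'N⟩ := hiN'ne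
          obtain ⟨R1, R2, hp1, hp2, hs1, hs2, htr, hne⟩ :=
            MLsame2 huv hPfull (hP iN) (hP iN')
              (hGoodP iN hiN) (hGoodP iN' hiN')
              (fun z hz hz' => hPdisj i0 iN (fun h => hiNne h.symm) z (hPsup z hz) hz')
              (fun z hz hz' => hPdisj i0 iN' (fun h => hN'0 h.symm) z (hPsup z hz) hz')
              (hPdisj iN iN' (fun h => hN'N h.symm))
              (hne' (fun h => hN'N h.symm)) hpu hpv hqu hqv hpq
          refine ⟨R1, R2, ⟨hp1, hp2⟩, ?_, ?_, htr, hne⟩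
          · intro z hz
            rcases hs1 z hz with h | h | h
            · exact hDmem i0 hi0 z (hPsup z h)
            · exact hDmem iN hiN z h
            · exact hDmem iN' hiN' z h
          · intro z hz
            rcases hs2 z hz with h | h | h
            · exact hDmem i0 hi0 z (hPsup z h)
            · exact hDmem iN hiN z h
            · exact hDmem iN' hiN' z h
        · have huT : u ∉ T := by
            intro h
            exact hc3 (by have := hWu h; omega)
          have hvT : v ∉ T := by
            intro h
            exact hc3 (by have := hWv h; omega)
          obtain ⟨iN, hiN, hiNne⟩ := pick_avoid Good {i0}
            (by rw [Finset.card_singleton]; omega)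
          simp only [Finset.mem_singleton] at hiNne
          obtain ⟨R1, R2, hp1, hp2, hs1, hs2, htr, hne⟩ :=
            MLsame0 huv huT hvT hPfull (hP iN)
              (fun z hz hzT => hGoodP i0 hi0 z (hPsup z hz) hzT)
              (hGoodP iN hiN)
              (fun z hz hz' => hPdisj i0 iN (fun h => hiNne h.symm) z (hPsup z hz) hz')
              hpu hpv hqu hqv hpq
          refine ⟨R1, R2, ⟨hp1, hp2⟩, ?_, ?_, htr, hne⟩
          · intro z hz
            rcases hs1 z hz with h | h
            · exact hDmem i0 hi0 z (hPsup z h)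
            · exact hDmem iN hiN z h
          · intro z hz
            rcases hs2 z hz with h | h
            · exact hDmem i0 hi0 z (hPsup z h)
            · exact hDmem iN hiN z h
      obtain ⟨R1, R2, ⟨hp1, hp2⟩, hs1, hs2, htr, hne⟩ := hcore
      rcases hpos with ⟨h1, h2⟩ | ⟨h1, h2⟩
      · subst h1; subst h2
        exact ⟨R1, R2, ⟨hp1, hp2⟩, hs1, hs2, htr, hne⟩
      · subst h1; subst h2
        refine ⟨R1.reverse, R2.reverse, ⟨hp1.reverse, hp2.reverse⟩, ?_, ?_, ?_, ?_⟩
        · intro z hz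
          exact hs1 z ((mem_rev_support _).mp hz)
        · intro z hz
          exact hs2 z ((mem_rev_support _).mp hz)
        · rw [Walk.support_reverse, Walk.support_reverse, List.filter_reverse,
            List.filter_reverse, htr]
        · intro h
          rw [Walk.support_reverse, Walk.support_reverse] at h
          exact hne (List.reverse_injective h)
  obtain ⟨R1, R2, ⟨h1, h2⟩, h3, h4, h5, h6⟩ := hfin
  exact finish R1 R2 h1 h2 h3 h4 h5 h6
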